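/- Regular functors preserve OPCAs: if A is an ordered partial combinatory algebra in a Heyting (or regular) category E and F : E → C is a regular functor to a regular category, then FA, with the order and application obtained by applying F, is an ordered partial combinatory algebra in C. -/

import Mathlib

open CategoryTheory CategoryTheory.Limits

universe w v u v₁ u₁ v₂ u₂ v₃ u₃

namespace RRC

variable {E : Type u} [Category.{v} E]

/-- A cover is a regular epimorphism. -/
def IsCover {X Y : E} (f : X ⟶ Y) : Prop := Nonempty (RegularEpi f)

/-- A regular category: finite limits, pullback-stable regular-epi/mono image
factorizations. -/
class RegularCat (E : Type u) [Category.{v} E] : Prop where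
  hasFiniteLimits : HasFiniteLimits E
  hasImages : HasImages E
  coverFactorThruImage : ∀ {X Y : E} (f : X ⟶ Y),
    IsCover (X := X) (Y := (haveI := hasImages; image f))
      (haveI := hasImages; haveI := hasFiniteLimits; factorThruImage f)
  coverStable : ∀ {P X Y Z : E} (fst : P ⟶ X) (snd : P ⟶ Y) (f : X ⟶ Z) (g : Y ⟶ Z),
    IsPullback fst snd f g → IsCover g → IsCover fst

attribute [instance] RegularCat.hasFiniteLimits RegularCat.hasImages

/-- A Heyting-algebra structure on a partial order (with all data pinned to the
given order). -/
structure HeytingOn (α : Type w) [PartialOrder α] where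
  sup : α → α → α
  inf : α → α → α
  himp : α → α → α
  bot : α
  top : α
  le_top : ∀ a, a ≤ top
  bot_le : ∀ a, bot ≤ a
  inf_le_left : ∀ a b, inf a b ≤ a
  inf_le_right : ∀ a b, inf a b ≤ b
  le_inf : ∀ a b c, a ≤ b → a ≤ c → a ≤ inf b c
  le_sup_left : ∀ a b, a ≤ sup a b
  le_sup_right : ∀ a b, b ≤ sup a b
  sup_le : ∀ a b c, a ≤ c → b ≤ c → sup a b ≤ c
  le_himp_iff : ∀ a b c, a ≤ himp b c ↔ inf a b ≤ c

/-- Both adjoints `∃_f ⊣ f⁻¹ ⊣ ∀_f` to the pullback map on subobject lattices. -/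
structure SubAdjoints {X Y : E} (f : X ⟶ Y) : Type (max u v) where
  pb : Subobject Y → Subobject X
  pb_spec : ∀ (S : Subobject Y) {Γ : E} (g : Γ ⟶ X), (pb S).Factors g ↔ S.Factors (g ≫ f)
  ex : Subobject X → Subobject Y
  all : Subobject X → Subobject Y
  gc_ex : ∀ (S : Subobject X) (T : Subobject Y), ex S ≤ T ↔ S ≤ pb T
  gc_all : ∀ (T : Subobject Y) (S : Subobject X), pb T ≤ S ↔ T ≤ all S

/-- A Heyting category: a regular category where each subobject lattice is a
Heyting algebra and each pullback map on subobjects has both adjoints. -/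
class HeytingCat (E : Type u) [Category.{v} E] : Prop where
  toRegularCat : RegularCat E
  heyting : ∀ X : E, Nonempty (HeytingOn (Subobject X))
  adjoints : ∀ {X Y : E} (f : X ⟶ Y), Nonempty (SubAdjoints f)

attribute [instance] HeytingCat.toRegularCat

/-- A regular functor: preserves finite limits and covers (regular epis). -/
structure IsRegularFunctor {C : Type u₁} [Category.{v₁} C] {D : Type u₂} [Category.{v₂} D]
    (F : C ⥤ D) : Prop where
  preservesFiniteLimits : PreservesFiniteLimits F
  preservesCovers : ∀ {X Y : C} (f : X ⟶ Y), IsCover f → IsCover (F.map f)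

/-- The image of a subobject under a functor (defaults to `⊤` if the functor fails
to preserve the monomorphism). -/
noncomputable def mapSub {C : Type u₁} [Category.{v₁} C] {D : Type u₂} [Category.{v₂} D]
    (F : C ⥤ D) {X : C} (S : Subobject X) : Subobject (F.obj X) :=
  haveI := Classical.propDecidable (Mono (F.map S.arrow))
  if h : Mono (F.map S.arrow) then @Subobject.mk _ _ _ _ (F.map S.arrow) h else ⊤

section OPAS

variable (E) [HasFiniteLimits E]

/-- An ordered partial applicative structure internal to `E`: a partial order `le`
and a monotone partial binary application with downward closed domain, all
expressed via generalized elements. -/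
structure OPAS where
  A : E
  le : Subobject (A ⨯ A)
  le_refl : ∀ {Γ : E} (x : Γ ⟶ A), le.Factors (prod.lift x x)
  le_antisymm : ∀ {Γ : E} (x y : Γ ⟶ A),
    le.Factors (prod.lift x y) → le.Factors (prod.lift y x) → x = y
  le_trans : ∀ {Γ : E} (x y z : Γ ⟶ A),
    le.Factors (prod.lift x y) → le.Factors (prod.lift y z) → le.Factors (prod.lift x z)
  dom : Subobject (A ⨯ A)
  app : (dom : E) ⟶ A
  dom_down : ∀ {Γ : E} (a b c d : Γ ⟶ A),
    le.Factors (prod.lift a b) → le.Factors (prod.lift c d) →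
    dom.Factors (prod.lift b d) → dom.Factors (prod.lift a c)
  app_mono : ∀ {Γ : E} (a b c d : Γ ⟶ A) (hab : le.Factors (prod.lift a b))
    (hcd : le.Factors (prod.lift c d)) (h : dom.Factors (prod.lift b d)),
    le.Factors (prod.lift (dom.factorThru (prod.lift a c) (dom_down a b c d hab hcd h) ≫ app)
      (dom.factorThru (prod.lift b d) h ≫ app))

end OPAS

variable [HasFiniteLimits E]

/-- `x ≤ y` for generalized elements of an OPAS. -/
def OPAS.Le (S : OPAS E) {Γ : E} (x y : Γ ⟶ S.A) : Prop := S.le.Factors (prod.lift x y)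

/-- `x · y ↓ z` for generalized elements of an OPAS. -/
def OPAS.App (S : OPAS E) {Γ : E} (x y z : Γ ⟶ S.A) : Prop :=
  ∃ h : S.dom.Factors (prod.lift x y), S.dom.factorThru (prod.lift x y) h ≫ S.app = z

/-- Applicative terms in `n` variables (built from projections/variables by
pointwise application); these present the partial combinatory arrows `Aⁿ ⇀ A`. -/
inductive PTerm : ℕ → Type where
  | var {n : ℕ} : Fin n → PTerm n
  | app {n : ℕ} : PTerm n → PTerm n → PTerm n

/-- Weakening of an applicative term. -/
def PTerm.weaken : {n : ℕ} → PTerm n → PTerm (n + 1)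
  | _, .var i => .var i.castSucc
  | _, .app s t => .app s.weaken t.weaken

/-- The term `x₀ x₁ ⋯ xₙ` (iterated application of the extra first variable). -/
def iterTerm : (n : ℕ) → PTerm (n + 1)
  | 0 => .var 0
  | n + 1 => .app (iterTerm n).weaken (.var (Fin.last (n + 1)))

/-- Evaluation (Kleene equality style) of an applicative term on generalized
elements of an OPAS. -/
def OPAS.Eval (S : OPAS E) {Γ : E} : {n : ℕ} → PTerm n → (Fin n → (Γ ⟶ S.A)) → (Γ ⟶ S.A) → Prop
  | _, .var i, x, z => z = x i
  | _, .app s t, x, z => ∃ u v, S.Eval s x u ∧ S.Eval t x v ∧ S.App u v z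

/-- `r` represents the partial combinatory arrow `t` (at its stage of definition):
at every later stage, whenever `t` is defined on a tuple `x` with value `v`, the
iterated application `r x₁ ⋯ xₙ` is defined with value `≤ v`. -/
def OPAS.RepresentsAt (S : OPAS E) {n : ℕ} (t : PTerm n) {Γ : E} (r : Γ ⟶ S.A) : Prop :=
  ∀ (Δ : E) (g : Δ ⟶ Γ) (x : Fin n → (Δ ⟶ S.A)) (v : Δ ⟶ S.A),
    S.Eval t x v → ∃ y : Δ ⟶ S.A, S.Le y v ∧ S.Eval (iterTerm n) (Fin.cons (g ≫ r) x) y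

/-- A subobject is inhabited when its support is the whole terminal object. -/
def Inhab {X : E} (U : Subobject X) : Prop :=
  ∃ (Γ : E) (e : Γ ⟶ ⊤_ E) (a : Γ ⟶ X), IsCover e ∧ U.Factors a

/-- Two subobjects intersect when their intersection is inhabited. -/
def Intersects {X : E} (U V : Subobject X) : Prop :=
  ∃ (Γ : E) (e : Γ ⟶ ⊤_ E) (a : Γ ⟶ X), IsCover e ∧ U.Factors a ∧ V.Factors a

/-- An ordered partial combinatory algebra: an OPAS in which every partial
combinatory arrow is representable (the object of realizers is inhabited). -/
structure OPCA (E : Type u) [Category.{v} E] [HasFiniteLimits E] extends OPAS E where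
  complete : ∀ {n : ℕ} (t : PTerm n), ∃ (Γ : E) (e : Γ ⟶ ⊤_ E) (r : Γ ⟶ toOPAS.A),
    IsCover e ∧ toOPAS.RepresentsAt t r

/-- An OPCA pair `(A', A)`: an OPAS `A` with a subobject `A'` that is closed under
the application of `A` and such that the object of realizers of every partial
combinatory arrow of `A` intersects `A'`. -/
structure OPCAPair (E : Type u) [Category.{v} E] [HasFiniteLimits E] where
  S : OPAS E
  A' : Subobject S.A
  closed : ∀ {Γ : E} (x y z : Γ ⟶ S.A),
    A'.Factors x → A'.Factors y → S.App x y z → A'.Factors z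
  complete : ∀ {n : ℕ} (t : PTerm n), ∃ (Γ : E) (e : Γ ⟶ ⊤_ E) (r : Γ ⟶ S.A),
    IsCover e ∧ A'.Factors r ∧ S.RepresentsAt t r

/-- The underlying object of realizers of an OPCA pair. -/
abbrev OPCAPair.A (P : OPCAPair E) : E := P.S.A

/-- An `F`-filter for a regular functor `F` out of `E`: a subobject of `F A` that
is upward closed, closed under application, and meets `F U` whenever `U ⊆ A`
intersects `A'`. -/
structure RFilter {C : Type u₁} [Category.{v₁} C] (P : OPCAPair E) (F : E ⥤ C) where
  carrier : Subobject (F.obj P.A)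
  upward : ∀ {Γ : C} (p : Γ ⟶ F.obj (P.A ⨯ P.A)),
    (mapSub F P.S.le).Factors p → carrier.Factors (p ≫ F.map prod.fst) →
    carrier.Factors (p ≫ F.map prod.snd)
  app_closed : ∀ {Γ : C} (p : Γ ⟶ F.obj ((P.S.dom : E))),
    carrier.Factors (p ≫ F.map (P.S.dom.arrow ≫ prod.fst)) →
    carrier.Factors (p ≫ F.map (P.S.dom.arrow ≫ prod.snd)) →
    carrier.Factors (p ≫ F.map P.S.app)
  meets : ∀ U : Subobject P.A, Intersects U P.A' →
    ∃ (Γ : C) (e : Γ ⟶ F.obj (⊤_ E)) (a : Γ ⟶ F.obj P.A),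
      IsCover e ∧ (mapSub F U).Factors a ∧ carrier.Factors a

/-- A morphism of regular models `(F, Cf) → (G, Df)`: the isomorphism `η`
restricts to an isomorphism between the image of the filter `Cf` and `Df`. -/
def FilterIso {C : Type u₁} [Category.{v₁} C] {D : Type u₂} [Category.{v₂} D]
    (P : OPCAPair E) (F : E ⥤ C) (G : E ⥤ D) (Cf : RFilter P F) (Df : RFilter P G)
    (H : C ⥤ D) (η : F ⋙ H ≅ G) : Prop :=
  Subobject.mk ((mapSub H Cf.carrier).arrow ≫ η.hom.app P.A) = Df.carrier

end RRC

namespace RRC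

open CategoryTheory CategoryTheory.Limits

variable {E : Type u} [Category.{v} E] [HasFiniteLimits E]

/-- Transport of a binary relation `S ⊆ A × A` along a functor, via the product
comparison morphism (defaulting to `⊤` if monomorphy fails). -/
noncomputable def mapRel {C : Type u₁} [Category.{v₁} C] [HasBinaryProducts C]
    (F : E ⥤ C) {A : E} (S : Subobject (A ⨯ A)) : Subobject (F.obj A ⨯ F.obj A) :=
  haveI := Classical.propDecidable (Mono (F.map S.arrow ≫ prodComparison F A A))
  if h : Mono (F.map S.arrow ≫ prodComparison F A A) then
    @Subobject.mk _ _ _ _ (F.map S.arrow ≫ prodComparison F A A) h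
  else ⊤

section Transport

variable {C : Type u₁} [Category.{v₁} C] [HasFiniteLimits C]
variable (F : E ⥤ C) [PreservesFiniteLimits F]

/-- Factoring through `Subobject.mk f` is the same as factoring through `f`. -/
theorem mkFactors_iff {D : Type u₂} [Category.{v₂} D] {X Y Z : D} (f : Y ⟶ X) [Mono f]
    (g : Z ⟶ X) : (Subobject.mk f).Factors g ↔ ∃ u, u ≫ f = g := by
  constructor
  · intro h
    exact ⟨(Subobject.mk f).factorThru g h ≫ (Subobject.underlyingIso f).hom, by
      rw [Category.assoc, Subobject.underlyingIso_hom_comp_eq_mk,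
        Subobject.factorThru_arrow]⟩
  · rintro ⟨u, rfl⟩
    exact Subobject.factors_of_factors_right u (Subobject.mk_factors_self f)

theorem map_lift_prodComparison {X A B : E} (a : X ⟶ A) (b : X ⟶ B) :
    F.map (prod.lift a b) ≫ prodComparison F A B = prod.lift (F.map a) (F.map b) := by
  apply Limits.prod.hom_ext
  · rw [Category.assoc, prodComparison_fst, ← F.map_comp, prod.lift_fst, prod.lift_fst]
  · rw [Category.assoc, prodComparison_snd, ← F.map_comp, prod.lift_snd, prod.lift_snd]

/-- Merge two generalized elements of `F`-images over a common base. -/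
theorem merge {Δ : C} {Γ₁ Γ₂ X : E} (f₁ : Γ₁ ⟶ X) (f₂ : Γ₂ ⟶ X)
    (p₁ : Δ ⟶ F.obj Γ₁) (p₂ : Δ ⟶ F.obj Γ₂) (h : p₁ ≫ F.map f₁ = p₂ ≫ F.map f₂) :
    ∃ (Γ : E) (q₁ : Γ ⟶ Γ₁) (q₂ : Γ ⟶ Γ₂) (p : Δ ⟶ F.obj Γ),
      q₁ ≫ f₁ = q₂ ≫ f₂ ∧ p ≫ F.map q₁ = p₁ ∧ p ≫ F.map q₂ = p₂ := by
  have hpb := (IsPullback.of_hasPullback f₁ f₂).map F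
  exact ⟨pullback f₁ f₂, pullback.fst f₁ f₂, pullback.snd f₁ f₂, hpb.lift p₁ p₂ h,
    pullback.condition, hpb.lift_fst p₁ p₂ h, hpb.lift_snd p₁ p₂ h⟩

theorem map_comp_assoc {Γ₁ Γ₂ Γ₃ : E} {Δ : C} (p : Δ ⟶ F.obj Γ₁) (f : Γ₁ ⟶ Γ₂)
    (g : Γ₂ ⟶ Γ₃) : p ≫ F.map (f ≫ g) = (p ≫ F.map f) ≫ F.map g := by
  rw [F.map_comp, Category.assoc]

variable {A : E}

instance mono_pushRel (S : Subobject (A ⨯ A)) :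
    Mono (F.map S.arrow ≫ prodComparison F A A) :=
  mono_comp _ _

/-- The direct-image relation, as a `Subobject.mk`. -/
@[reducible] noncomputable def pushRel (S : Subobject (A ⨯ A)) : Subobject (F.obj A ⨯ F.obj A) :=
  Subobject.mk (F.map S.arrow ≫ prodComparison F A A)

theorem pushRel_eq_mapRel (S : Subobject (A ⨯ A)) : pushRel F S = mapRel F S := by
  rw [mapRel, dif_pos (mono_pushRel F S)]

theorem pushRel_factors_iff (S : Subobject (A ⨯ A)) {Γ : C} (g : Γ ⟶ F.obj A ⨯ F.obj A) :
    (pushRel F S).Factors g ↔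
      ∃ u : Γ ⟶ F.obj (S : E), u ≫ (F.map S.arrow ≫ prodComparison F A A) = g :=
  mkFactors_iff _ _

theorem factor_comp_pc {S : Subobject (A ⨯ A)} {Γ : E} {Δ : C} (p : Δ ⟶ F.obj Γ)
    {a b : Γ ⟶ A} (h : S.Factors (prod.lift a b)) :
    (p ≫ F.map (S.factorThru _ h)) ≫ (F.map S.arrow ≫ prodComparison F A A)
      = prod.lift (p ≫ F.map a) (p ≫ F.map b) :=
  calc (p ≫ F.map (S.factorThru _ h)) ≫ (F.map S.arrow ≫ prodComparison F A A)
      = p ≫ (F.map (S.factorThru _ h) ≫ F.map S.arrow) ≫ prodComparison F A A := by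
        simp only [Category.assoc]
    _ = p ≫ F.map (prod.lift a b) ≫ prodComparison F A A := by
        rw [← F.map_comp, Subobject.factorThru_arrow]
    _ = p ≫ prod.lift (F.map a) (F.map b) := by rw [map_lift_prodComparison]
    _ = prod.lift (p ≫ F.map a) (p ≫ F.map b) := by rw [prod.comp_lift]

theorem relPush {S : Subobject (A ⨯ A)} {Γ : E} {Δ : C} (p : Δ ⟶ F.obj Γ)
    {a b : Γ ⟶ A} (h : S.Factors (prod.lift a b)) :
    (pushRel F S).Factors (prod.lift (p ≫ F.map a) (p ≫ F.map b)) := by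
  rw [pushRel_factors_iff]
  exact ⟨p ≫ F.map (S.factorThru _ h), factor_comp_pc F p h⟩

theorem relTransfer {S : Subobject (A ⨯ A)} {Δ : C} {x y : Δ ⟶ F.obj A}
    (h : (pushRel F S).Factors (prod.lift x y)) :
    ∃ (Γ : E) (a b : Γ ⟶ A) (p : Δ ⟶ F.obj Γ),
      S.Factors (prod.lift a b) ∧ p ≫ F.map a = x ∧ p ≫ F.map b = y := by
  rw [pushRel_factors_iff] at h
  obtain ⟨u, hu⟩ := h
  simp only [← Category.assoc] at hu
  refine ⟨(S : E), S.arrow ≫ prod.fst, S.arrow ≫ prod.snd, u, ?_, ?_, ?_⟩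
  · have e : prod.lift (S.arrow ≫ prod.fst) (S.arrow ≫ prod.snd) = S.arrow := by
      rw [← prod.comp_lift, prod.lift_fst_snd, Category.comp_id]
    rw [e]; exact S.factors_self
  · rw [F.map_comp, ← prodComparison_fst, ← Category.assoc, ← Category.assoc, hu,
      prod.lift_fst]
  · rw [F.map_comp, ← prodComparison_snd, ← Category.assoc, ← Category.assoc, hu,
      prod.lift_snd]

end Transport

section PushOPAS

variable {C : Type u₁} [Category.{v₁} C] [HasFiniteLimits C]
variable (F : E ⥤ C) [PreservesFiniteLimits F]

theorem OPAS.eval_var_iff {D : Type u₂} [Category.{v₂} D] [HasFiniteLimits D]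
    {S : OPAS D} {n : ℕ} {i : Fin n} {Γ : D} {u : Fin n → (Γ ⟶ S.A)} {w : Γ ⟶ S.A} :
    S.Eval (PTerm.var i) u w ↔ w = u i := by
  simp only [OPAS.Eval]

theorem OPAS.eval_app_iff {D : Type u₂} [Category.{v₂} D] [HasFiniteLimits D]
    {S : OPAS D} {n : ℕ} {s t : PTerm n} {Γ : D} {u : Fin n → (Γ ⟶ S.A)} {w : Γ ⟶ S.A} :
    S.Eval (PTerm.app s t) u w ↔
      ∃ a b, S.Eval s u a ∧ S.Eval t u b ∧ S.App a b w := by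
  simp only [OPAS.Eval]

theorem OPAS.App.precomp {S : OPAS E} {Γ Δ₀ : E} (g : Δ₀ ⟶ Γ) {a b c : Γ ⟶ S.A}
    (h : S.App a b c) : S.App (g ≫ a) (g ≫ b) (g ≫ c) := by
  obtain ⟨hf, he⟩ := h
  have hf' : S.dom.Factors (prod.lift (g ≫ a) (g ≫ b)) := by
    rw [← prod.comp_lift]
    exact Subobject.factors_of_factors_right g hf
  refine ⟨hf', ?_⟩
  have e : S.dom.factorThru (prod.lift (g ≫ a) (g ≫ b)) hf'
      = g ≫ S.dom.factorThru (prod.lift a b) hf := by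
    rw [← cancel_mono S.dom.arrow, Subobject.factorThru_arrow, Category.assoc,
      Subobject.factorThru_arrow, prod.comp_lift]
  rw [e, Category.assoc, he]

theorem OPAS.Eval.precomp {S : OPAS E} {n : ℕ} {t : PTerm n} {Γ Δ₀ : E} (g : Δ₀ ⟶ Γ)
    {u : Fin n → (Γ ⟶ S.A)} {w : Γ ⟶ S.A} (h : S.Eval t u w) :
    S.Eval t (fun i => g ≫ u i) (g ≫ w) := by
  induction t generalizing w with
  | var i =>
    rw [OPAS.eval_var_iff] at h
    exact OPAS.eval_var_iff.mpr (congrArg (fun z => g ≫ z) h)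
  | app s t ihs iht =>
    obtain ⟨a, b, ha, hb, hab⟩ := OPAS.eval_app_iff.mp h
    exact OPAS.eval_app_iff.mpr ⟨g ≫ a, g ≫ b, ihs ha, iht hb, hab.precomp g⟩

variable (S : OPAS E)

/-- Computation of the transported application on factorizations. -/
theorem push_factorThru_app {Δ : C} (γ : Δ ⟶ F.obj (S.dom : E))
    (m : Δ ⟶ F.obj S.A ⨯ F.obj S.A)
    (hγ : γ ≫ (F.map S.dom.arrow ≫ prodComparison F S.A S.A) = m)
    (hm : (pushRel F S.dom).Factors m) :
    (pushRel F S.dom).factorThru m hm ≫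
      ((Subobject.underlyingIso (F.map S.dom.arrow ≫ prodComparison F S.A S.A)).hom ≫
        F.map S.app)
      = γ ≫ F.map S.app := by
  have h1 : (pushRel F S.dom).factorThru m hm ≫
      (Subobject.underlyingIso (F.map S.dom.arrow ≫ prodComparison F S.A S.A)).hom = γ := by
    rw [← cancel_mono (F.map S.dom.arrow ≫ prodComparison F S.A S.A), Category.assoc,
      Subobject.underlyingIso_hom_comp_eq_mk, hγ]
    exact Subobject.factorThru_arrow _ _ hm
  rw [← Category.assoc, h1]

/-- The OPAS structure transported along a finite-limit-preserving functor. -/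
@[reducible] noncomputable def pushOPAS : OPAS C where
  A := F.obj S.A
  le := pushRel F S.le
  le_refl := fun {Γ} x => by
    have h := relPush F x (S.le_refl (𝟙 S.A))
    simpa using h
  le_antisymm := fun {Γ} x y hxy hyx => by
    obtain ⟨Γ₁, a₁, b₁, p₁, h₁, ha₁, hb₁⟩ := relTransfer F hxy
    obtain ⟨Γ₂, a₂, b₂, p₂, h₂, ha₂, hb₂⟩ := relTransfer F hyx
    have key : p₁ ≫ F.map (prod.lift a₁ b₁) = p₂ ≫ F.map (prod.lift b₂ a₂) := by
      rw [← cancel_mono (prodComparison F S.A S.A), Category.assoc, Category.assoc,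
        map_lift_prodComparison, map_lift_prodComparison, prod.comp_lift, prod.comp_lift,
        ha₁, hb₁, ha₂, hb₂]
    obtain ⟨Γ₀, q₁, q₂, p, hq, hp₁, hp₂⟩ := merge F _ _ p₁ p₂ key
    have hq1 : q₁ ≫ a₁ = q₂ ≫ b₂ := by
      have h' := congrArg (· ≫ prod.fst) hq
      simp only [Category.assoc, prod.lift_fst] at h'
      exact h'
    have hq2 : q₁ ≫ b₁ = q₂ ≫ a₂ := by
      have h' := congrArg (· ≫ prod.snd) hq
      simp only [Category.assoc, prod.lift_snd] at h'
      exact h'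
    have e₁ : S.le.Factors (prod.lift (q₁ ≫ a₁) (q₁ ≫ b₁)) := by
      rw [← prod.comp_lift]; exact Subobject.factors_of_factors_right q₁ h₁
    have e₂ : S.le.Factors (prod.lift (q₁ ≫ b₁) (q₁ ≫ a₁)) := by
      rw [hq1, hq2, ← prod.comp_lift]
      exact Subobject.factors_of_factors_right q₂ h₂
    have e₃ := S.le_antisymm _ _ e₁ e₂
    calc x = p₁ ≫ F.map a₁ := ha₁.symm
      _ = p ≫ F.map (q₁ ≫ a₁) := by rw [map_comp_assoc, hp₁]
      _ = p ≫ F.map (q₁ ≫ b₁) := by rw [e₃]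
      _ = p₁ ≫ F.map b₁ := by rw [map_comp_assoc, hp₁]
      _ = y := hb₁
  le_trans := fun {Γ} x y z hxy hyz => by
    obtain ⟨Γ₁, a₁, b₁, p₁, h₁, ha₁, hb₁⟩ := relTransfer F hxy
    obtain ⟨Γ₂, a₂, b₂, p₂, h₂, ha₂, hb₂⟩ := relTransfer F hyz
    obtain ⟨Γ₀, q₁, q₂, p, hq, hp₁, hp₂⟩ := merge F b₁ a₂ p₁ p₂ (by rw [hb₁, ha₂])
    have e₁ : S.le.Factors (prod.lift (q₁ ≫ a₁) (q₁ ≫ b₁)) := by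
      rw [← prod.comp_lift]; exact Subobject.factors_of_factors_right q₁ h₁
    have e₂ : S.le.Factors (prod.lift (q₁ ≫ b₁) (q₂ ≫ b₂)) := by
      rw [hq, ← prod.comp_lift]
      exact Subobject.factors_of_factors_right q₂ h₂
    have e₃ := S.le_trans _ _ _ e₁ e₂
    have h' := relPush F p e₃
    rwa [map_comp_assoc, map_comp_assoc, hp₁, hp₂, ha₁, hb₂] at h'
  dom := pushRel F S.dom
  app := (Subobject.underlyingIso (F.map S.dom.arrow ≫ prodComparison F S.A S.A)).hom ≫
    F.map S.app
  dom_down := fun {Γ} a b c d hab hcd h => by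
    obtain ⟨Γ₁, a₁, b₁, p₁, h₁, ha₁, hb₁⟩ := relTransfer F hab
    obtain ⟨Γ₂, c₂, d₂, p₂, h₂, hc₂, hd₂⟩ := relTransfer F hcd
    obtain ⟨Γ₃, b₃, d₃, p₃, h₃, hb₃, hd₃⟩ := relTransfer F h
    obtain ⟨Γ₁₃, r₁, r₃, p₁₃, hr, hpr₁, hpr₃⟩ := merge F b₁ b₃ p₁ p₃ (by rw [hb₁, hb₃])
    obtain ⟨Γ₀, s₁, s₂, p, hs, hps₁, hps₂⟩ :=
      merge F (r₃ ≫ d₃) d₂ p₁₃ p₂ (by rw [map_comp_assoc, hpr₃, hd₃, hd₂])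
    have eab : S.le.Factors (prod.lift ((s₁ ≫ r₁) ≫ a₁) ((s₁ ≫ r₁) ≫ b₁)) := by
      rw [← prod.comp_lift]; exact Subobject.factors_of_factors_right _ h₁
    have ecd : S.le.Factors (prod.lift (s₂ ≫ c₂) (s₂ ≫ d₂)) := by
      rw [← prod.comp_lift]; exact Subobject.factors_of_factors_right _ h₂
    have ebd : S.dom.Factors (prod.lift ((s₁ ≫ r₁) ≫ b₁) (s₂ ≫ d₂)) := by
      have e1 : (s₁ ≫ r₁) ≫ b₁ = (s₁ ≫ r₃) ≫ b₃ := by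
        rw [Category.assoc, Category.assoc, hr]
      have e2 : s₂ ≫ d₂ = (s₁ ≫ r₃) ≫ d₃ := by
        rw [Category.assoc, ← hs]
      rw [e1, e2, ← prod.comp_lift]
      exact Subobject.factors_of_factors_right _ h₃
    have eac := S.dom_down _ _ _ _ eab ecd ebd
    have h' := relPush F p eac
    have hA : p ≫ F.map ((s₁ ≫ r₁) ≫ a₁) = a := by
      rw [map_comp_assoc, map_comp_assoc, hps₁, hpr₁, ha₁]
    have hC : p ≫ F.map (s₂ ≫ c₂) = c := by
      rw [map_comp_assoc, hps₂, hc₂]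
    rwa [hA, hC] at h'
  app_mono := fun {Γ} a b c d hab hcd h => by
    obtain ⟨Γ₁, a₁, b₁, p₁, h₁, ha₁, hb₁⟩ := relTransfer F hab
    obtain ⟨Γ₂, c₂, d₂, p₂, h₂, hc₂, hd₂⟩ := relTransfer F hcd
    obtain ⟨Γ₃, b₃, d₃, p₃, h₃, hb₃, hd₃⟩ := relTransfer F h
    obtain ⟨Γ₁₃, r₁, r₃, p₁₃, hr, hpr₁, hpr₃⟩ := merge F b₁ b₃ p₁ p₃ (by rw [hb₁, hb₃])
    obtain ⟨Γ₀, s₁, s₂, p, hs, hps₁, hps₂⟩ :=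
      merge F (r₃ ≫ d₃) d₂ p₁₃ p₂ (by rw [map_comp_assoc, hpr₃, hd₃, hd₂])
    have eab : S.le.Factors (prod.lift ((s₁ ≫ r₁) ≫ a₁) ((s₁ ≫ r₁) ≫ b₁)) := by
      rw [← prod.comp_lift]; exact Subobject.factors_of_factors_right _ h₁
    have ecd : S.le.Factors (prod.lift (s₂ ≫ c₂) (s₂ ≫ d₂)) := by
      rw [← prod.comp_lift]; exact Subobject.factors_of_factors_right _ h₂
    have ebd : S.dom.Factors (prod.lift ((s₁ ≫ r₁) ≫ b₁) (s₂ ≫ d₂)) := by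
      have e1 : (s₁ ≫ r₁) ≫ b₁ = (s₁ ≫ r₃) ≫ b₃ := by
        rw [Category.assoc, Category.assoc, hr]
      have e2 : s₂ ≫ d₂ = (s₁ ≫ r₃) ≫ d₃ := by
        rw [Category.assoc, ← hs]
      rw [e1, e2, ← prod.comp_lift]
      exact Subobject.factors_of_factors_right _ h₃
    have eac := S.dom_down _ _ _ _ eab ecd ebd
    have hA : p ≫ F.map ((s₁ ≫ r₁) ≫ a₁) = a := by
      rw [map_comp_assoc, map_comp_assoc, hps₁, hpr₁, ha₁]
    have hB : p ≫ F.map ((s₁ ≫ r₁) ≫ b₁) = b := by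
      rw [map_comp_assoc, map_comp_assoc, hps₁, hpr₁, hb₁]
    have hC : p ≫ F.map (s₂ ≫ c₂) = c := by
      rw [map_comp_assoc, hps₂, hc₂]
    have hD : p ≫ F.map (s₂ ≫ d₂) = d := by
      rw [map_comp_assoc, hps₂, hd₂]
    have emono := S.app_mono _ _ _ _ eab ecd ebd
    have hpush := relPush F p emono
    have hγ₁ : (p ≫ F.map (S.dom.factorThru _ eac)) ≫
        (F.map S.dom.arrow ≫ prodComparison F S.A S.A) = prod.lift a c := by
      rw [factor_comp_pc, hA, hC]
    have hγ₂ : (p ≫ F.map (S.dom.factorThru _ ebd)) ≫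
        (F.map S.dom.arrow ≫ prodComparison F S.A S.A) = prod.lift b d := by
      rw [factor_comp_pc, hB, hD]
    rw [push_factorThru_app F S _ _ hγ₁, push_factorThru_app F S _ _ hγ₂]
    rwa [map_comp_assoc, map_comp_assoc] at hpush

@[simp] theorem pushOPAS_A : (pushOPAS F S).A = F.obj S.A := rfl

@[simp] theorem pushOPAS_le : (pushOPAS F S).le = pushRel F S.le := rfl

@[simp] theorem pushOPAS_dom : (pushOPAS F S).dom = pushRel F S.dom := rfl

@[simp] theorem pushOPAS_app : (pushOPAS F S).app =
    (Subobject.underlyingIso (F.map S.dom.arrow ≫ prodComparison F S.A S.A)).hom ≫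
      F.map S.app := rfl

theorem push_le {Γ : E} {Δ : C} (p : Δ ⟶ F.obj Γ) {a b : Γ ⟶ S.A}
    (h : S.Le a b) : (pushOPAS F S).Le (p ≫ F.map a) (p ≫ F.map b) :=
  relPush F p h

theorem push_app {Γ : E} {Δ : C} (p : Δ ⟶ F.obj Γ) {a b c : Γ ⟶ S.A}
    (h : S.App a b c) :
    (pushOPAS F S).App (p ≫ F.map a) (p ≫ F.map b) (p ≫ F.map c) := by
  obtain ⟨hd, he⟩ := h
  have hm : (pushRel F S.dom).Factors (prod.lift (p ≫ F.map a) (p ≫ F.map b)) :=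
    relPush F p hd
  refine ⟨hm, ?_⟩
  show (pushRel F S.dom).factorThru _ hm ≫
    ((Subobject.underlyingIso (F.map S.dom.arrow ≫ prodComparison F S.A S.A)).hom ≫
      F.map S.app) = p ≫ F.map c
  rw [push_factorThru_app F S _ _ (factor_comp_pc F p hd) hm, Category.assoc,
    ← F.map_comp, he]

theorem push_eval {n : ℕ} {t : PTerm n} {Γ : E} {Δ : C} (p : Δ ⟶ F.obj Γ)
    {u : Fin n → (Γ ⟶ S.A)} {w : Γ ⟶ S.A} (h : S.Eval t u w) :
    (pushOPAS F S).Eval t (fun i => p ≫ F.map (u i)) (p ≫ F.map w) := by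
  induction t generalizing w with
  | var i =>
    rw [OPAS.eval_var_iff] at h
    exact OPAS.eval_var_iff.mpr (congrArg (fun z => p ≫ F.map z) h)
  | app s t ihs iht =>
    obtain ⟨a, b, ha, hb, hab⟩ := OPAS.eval_app_iff.mp h
    exact OPAS.eval_app_iff.mpr ⟨_, _, ihs ha, iht hb, push_app F S p hab⟩

theorem transfer_eval {n : ℕ} (t : PTerm n) {Δ : C}
    (x : Fin n → (Δ ⟶ F.obj S.A)) (v : Δ ⟶ F.obj S.A)
    (h : (pushOPAS F S).Eval t x v) :
    ∃ (Γ : E) (u : Fin n → (Γ ⟶ S.A)) (w : Γ ⟶ S.A) (p : Δ ⟶ F.obj Γ),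
      S.Eval t u w ∧ (∀ i, p ≫ F.map (u i) = x i) ∧ p ≫ F.map w = v := by
  induction t generalizing v with
  | var i =>
    have hv : v = x i := OPAS.eval_var_iff.mp h
    have hpi : ∀ j, (Pi.lift x ≫ inv (piComparison F (fun _ : Fin n => S.A))) ≫
        F.map (Pi.π (fun _ : Fin n => S.A) j) = x j := by
      intro j
      have e : inv (piComparison F (fun _ : Fin n => S.A)) ≫
          F.map (Pi.π (fun _ : Fin n => S.A) j) = Pi.π _ j := by
        rw [IsIso.inv_comp_eq, piComparison_comp_π]
      rw [Category.assoc, e, Pi.lift_π]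
    refine ⟨∏ᶜ (fun _ : Fin n => S.A), fun j => Pi.π _ j, Pi.π _ i,
      Pi.lift x ≫ inv (piComparison F (fun _ : Fin n => S.A)),
      OPAS.eval_var_iff.mpr rfl, hpi, ?_⟩
    rw [hv]; exact hpi i
  | app s t ihs iht =>
    obtain ⟨av, bv, has, hbt, happ⟩ := OPAS.eval_app_iff.mp h
    obtain ⟨Γ₁, u₁, w₁, p₁, hE₁, hx₁, hw₁⟩ := ihs _ has
    obtain ⟨Γ₂, u₂, w₂, p₂, hE₂, hx₂, hw₂⟩ := iht _ hbt
    have hmm : p₁ ≫ F.map (Pi.lift u₁) = p₂ ≫ F.map (Pi.lift u₂) := by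
      rw [← cancel_mono (piComparison F (fun _ : Fin n => S.A))]
      apply Pi.hom_ext
      intro j
      simp only [Category.assoc, map_lift_piComparison, Pi.lift_π]
      rw [hx₁ j, hx₂ j]
    obtain ⟨Γ₀, q₁, q₂, p₀, hq, hp₀₁, hp₀₂⟩ := merge F (Pi.lift u₁) (Pi.lift u₂) p₁ p₂ hmm
    have hqi : ∀ j, q₁ ≫ u₁ j = q₂ ≫ u₂ j := by
      intro j
      have h' := congrArg (· ≫ Pi.π (fun _ : Fin n => S.A) j) hq
      simpa using h'
    obtain ⟨hdom', happ_eq⟩ := happ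
    have hdom'' : (pushRel F S.dom).Factors (prod.lift av bv) := hdom'
    obtain ⟨γ₀, hγ₀⟩ := (pushRel_factors_iff F S.dom _).mp hdom''
    have hm2 : p₀ ≫ F.map (prod.lift (q₁ ≫ w₁) (q₂ ≫ w₂)) = γ₀ ≫ F.map S.dom.arrow := by
      rw [← cancel_mono (prodComparison F S.A S.A), Category.assoc, Category.assoc,
        map_lift_prodComparison, prod.comp_lift, map_comp_assoc, map_comp_assoc,
        hp₀₁, hp₀₂, hw₁, hw₂, ← hγ₀]
    obtain ⟨Γ, s₀, sd, p, hs, hps₀, hpsd⟩ := merge F _ _ p₀ γ₀ hm2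
    have hfacE : S.dom.Factors (prod.lift (s₀ ≫ (q₁ ≫ w₁)) (s₀ ≫ (q₂ ≫ w₂))) := by
      rw [← prod.comp_lift, hs]
      exact Subobject.factors_comp_arrow sd
    have hftE : S.dom.factorThru _ hfacE = sd := by
      rw [← cancel_mono S.dom.arrow, Subobject.factorThru_arrow, ← hs, prod.comp_lift]
    have hAppE : S.App (s₀ ≫ (q₁ ≫ w₁)) (s₀ ≫ (q₂ ≫ w₂)) (sd ≫ S.app) :=
      ⟨hfacE, by rw [hftE]⟩
    refine ⟨Γ, fun i => s₀ ≫ (q₁ ≫ u₁ i), sd ≫ S.app, p, ?_, ?_, ?_⟩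
    · refine OPAS.eval_app_iff.mpr ⟨s₀ ≫ (q₁ ≫ w₁), s₀ ≫ (q₂ ≫ w₂), ?_, ?_, hAppE⟩
      · exact OPAS.Eval.precomp s₀ (OPAS.Eval.precomp q₁ hE₁)
      · have h2 := OPAS.Eval.precomp s₀ (OPAS.Eval.precomp q₂ hE₂)
        have e : (fun i => s₀ ≫ (q₂ ≫ u₂ i)) = (fun i => s₀ ≫ (q₁ ≫ u₁ i)) :=
          funext fun i => by rw [hqi i]
        rwa [e] at h2
    · intro i
      rw [map_comp_assoc, hps₀, map_comp_assoc, hp₀₁, hx₁ i]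
    · rw [map_comp_assoc, hpsd, ← happ_eq]
      exact (push_factorThru_app F S γ₀ _ hγ₀ hdom'').symm

theorem push_representsAt {n : ℕ} {t : PTerm n} {Γr : E} {r : Γr ⟶ S.A}
    (hrep : S.RepresentsAt t r) : (pushOPAS F S).RepresentsAt t (F.map r) := by
  intro Δ g x v hv
  obtain ⟨Γ, u, w, p, hE, hx, hw⟩ := transfer_eval F S t x v hv
  obtain ⟨y, hyle, hyev⟩ := hrep (Γr ⨯ Γ) prod.fst (fun i => prod.snd ≫ u i)
    (prod.snd ≫ w) (OPAS.Eval.precomp prod.snd hE)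
  have e1 : inv (prodComparison F Γr Γ) ≫ F.map prod.fst = prod.fst := by
    rw [IsIso.inv_comp_eq, prodComparison_fst]
  have e2 : inv (prodComparison F Γr Γ) ≫ F.map prod.snd = prod.snd := by
    rw [IsIso.inv_comp_eq, prodComparison_snd]
  have hq1 : (prod.lift g p ≫ inv (prodComparison F Γr Γ)) ≫ F.map prod.fst = g := by
    rw [Category.assoc, e1, prod.lift_fst]
  have hq2 : (prod.lift g p ≫ inv (prodComparison F Γr Γ)) ≫ F.map prod.snd = p := by
    rw [Category.assoc, e2, prod.lift_snd]
  refine ⟨(prod.lift g p ≫ inv (prodComparison F Γr Γ)) ≫ F.map y, ?_, ?_⟩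
  · have h' := push_le F S (prod.lift g p ≫ inv (prodComparison F Γr Γ)) hyle
    rwa [map_comp_assoc, hq2, hw] at h'
  · have hev := push_eval F S (prod.lift g p ≫ inv (prodComparison F Γr Γ)) hyev
    have e : (fun i => (prod.lift g p ≫ inv (prodComparison F Γr Γ)) ≫
          F.map ((Fin.cons (prod.fst ≫ r) (fun j => prod.snd ≫ u j) :
            Fin (n + 1) → (Γr ⨯ Γ ⟶ S.A)) i))
        = (Fin.cons (g ≫ F.map r) x : Fin (n + 1) → (Δ ⟶ F.obj S.A)) := by
      funext i
      refine Fin.cases ?_ ?_ i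
      · rw [Fin.cons_zero, Fin.cons_zero, map_comp_assoc, hq1]
      · intro j
        rw [Fin.cons_succ, Fin.cons_succ, map_comp_assoc, hq2, hx j]
    rwa [e] at hev

theorem IsCover.comp_iso {D : Type u₂} [Category.{v₂} D] {X Y Z : D} {f : X ⟶ Y}
    (hf : IsCover f) (i : Y ⟶ Z) [IsIso i] : IsCover (f ≫ i) := by
  obtain ⟨re⟩ := hf
  have w' : re.left ≫ (f ≫ i) = re.right ≫ (f ≫ i) := by
    rw [← Category.assoc, re.w, Category.assoc]
  exact ⟨⟨re.W, re.left, re.right, w',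
    IsColimit.ofIsoColimit re.isColimit
      (Cofork.ext (asIso i) (by simp))⟩⟩

theorem push_complete
    (hc : ∀ {X Y : E} (f : X ⟶ Y), IsCover f → IsCover (F.map f))
    {n : ℕ} (t : PTerm n)
    (h : ∃ (Γ : E) (e : Γ ⟶ ⊤_ E) (r : Γ ⟶ S.A), IsCover e ∧ S.RepresentsAt t r) :
    ∃ (Γ : C) (e : Γ ⟶ ⊤_ C) (r : Γ ⟶ (pushOPAS F S).A),
      IsCover e ∧ (pushOPAS F S).RepresentsAt t r := by
  obtain ⟨Γ, e, r, hcov, hrep⟩ := h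
  exact ⟨F.obj Γ, F.map e ≫ (PreservesTerminal.iso F).hom, F.map r,
    (hc e hcov).comp_iso _, push_representsAt F S hrep⟩

end PushOPAS

/-- Statement 15: regular functors preserve OPCAs. If `A` is an OPCA in a
Heyting (or regular) category `E` and `F : E → C` is a regular functor to a
regular category `C`, then `F A`, with the order and application obtained by
applying `F`, is an OPCA in `C`. -/
theorem statement15 {E : Type u} [Category.{v} E] [HeytingCat E]
    {C : Type u₁} [Category.{v₁} C] [RegularCat C]
    (F : E ⥤ C) (hF : IsRegularFunctor F) (O : OPCA E) :
    ∃ O' : OPCA C, ∃ h : O'.A = F.obj O.A,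
      (Subobject.map (prod.map (eqToHom h) (eqToHom h))).obj O'.le
          = mapRel F O.toOPAS.le ∧
      (Subobject.map (prod.map (eqToHom h) (eqToHom h))).obj O'.dom
          = mapRel F O.toOPAS.dom ∧
      (∀ {Γ : E} (x y z : Γ ⟶ O.A), O.toOPAS.App x y z →
        O'.toOPAS.App (F.map x ≫ eqToHom h.symm) (F.map y ≫ eqToHom h.symm)
          (F.map z ≫ eqToHom h.symm)) := by
  haveI := hF.preservesFiniteLimits
  refine ⟨⟨pushOPAS F O.toOPAS, fun {n} t => push_complete F O.toOPAS hF.preservesCovers t (O.complete t)⟩, rfl, ?_, ?_, ?_⟩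
  · simp only [eqToHom_refl, prod.map_id_id, Subobject.map_id]
    exact pushRel_eq_mapRel F _
  · simp only [eqToHom_refl, prod.map_id_id, Subobject.map_id]
    exact pushRel_eq_mapRel F _
  · intro Γ x y z h
    have h' := push_app F O.toOPAS (𝟙 (F.obj Γ)) h
    simpa using h'


end RRC
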